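/- Let γ be a real 4×4 symplectic matrix, λ₀ a unit complex number with λ₀ ≠ ±1, and η₁, η₂ ∈ ℂ⁴ with γη₁ = λ₀η₁ and γη₂ = λ₀η₂ + λ₀η₁. Then ⟨η₂, Jη̄₁⟩ = 0 and ⟨η₁, Jη̄₂⟩ = 0, where η̄ᵢ are componentwise conjugates. -/

import Mathlib

open Matrix Complex Finset Polynomial

noncomputable section

/-- The standard symplectic form matrix `J₄ = [[0, I₂], [−I₂, 0]]` on `ℂ⁴`. -/
def J4 : Matrix (Fin 4) (Fin 4) ℂ :=
  !![0, 0, 1, 0; 0, 0, 0, 1; -1, 0, 0, 0; 0, -1, 0, 0]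

/-- The standard Hermitian inner product `⟨x, y⟩ = Σⱼ xⱼ conj(yⱼ)` on `ℂ⁴`. -/
def herm (x y : Fin 4 → ℂ) : ℂ := ∑ j, x j * (starRingEnd ℂ) (y j)

/-- A complex matrix has real entries. -/
def IsRealMat (M : Matrix (Fin 4) (Fin 4) ℂ) : Prop := ∀ i j, (M i j).im = 0

/-- A (complexified) matrix is symplectic: `Mᵀ J M = J`. -/
def IsSymp (M : Matrix (Fin 4) (Fin 4) ℂ) : Prop := Mᵀ * J4 * M = J4

/-- Componentwise complex conjugate of a vector in `ℂ⁴`. -/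
def conjVec (v : Fin 4 → ℂ) : Fin 4 → ℂ := fun j => (starRingEnd ℂ) (v j)

lemma J4_conj (i j : Fin 4) : (starRingEnd ℂ) (J4 i j) = J4 i j := by
  fin_cases i <;> fin_cases j <;> norm_num [J4, Matrix.vecHead, Matrix.vecTail]

lemma herm_eq (x y : Fin 4 → ℂ) :
    herm x (J4.mulVec (conjVec y)) = x ⬝ᵥ J4.mulVec y := by
  unfold herm dotProduct
  refine Finset.sum_congr rfl fun j _ => ?_
  congr 1
  simp only [mulVec, dotProduct, conjVec, map_sum, _root_.map_mul, J4_conj,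
    Complex.conj_conj]

lemma J4T : J4ᵀ = -J4 := by
  ext i j
  fin_cases i <;> fin_cases j <;> norm_num [J4, Matrix.vecHead, Matrix.vecTail]

lemma form_antisymm (x y : Fin 4 → ℂ) : x ⬝ᵥ J4.mulVec y = -(y ⬝ᵥ J4.mulVec x) := by
  rw [Matrix.dotProduct_mulVec, ← Matrix.mulVec_transpose, J4T, Matrix.neg_mulVec,
    neg_dotProduct, dotProduct_comm]

lemma form_inv (γ : Matrix (Fin 4) (Fin 4) ℂ) (hsymp : IsSymp γ) (x y : Fin 4 → ℂ) :
    (γ.mulVec x) ⬝ᵥ J4.mulVec (γ.mulVec y) = x ⬝ᵥ J4.mulVec y := by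
  have hkey : (J4 * γ)ᵀ * γ = -J4 := by
    rw [Matrix.transpose_mul, J4T, Matrix.mul_neg, Matrix.neg_mul,
      Matrix.mul_assoc] at *
    rw [← Matrix.mul_assoc, hsymp]
  rw [Matrix.mulVec_mulVec, Matrix.dotProduct_mulVec, ← Matrix.mulVec_transpose,
    Matrix.mulVec_mulVec, hkey, Matrix.neg_mulVec, neg_dotProduct,
    dotProduct_comm, ← form_antisymm]

theorem stmt2 (γ : Matrix (Fin 4) (Fin 4) ℂ) (hreal : IsRealMat γ) (hsymp : IsSymp γ)
    (lam0 : ℂ) (hunit : ‖lam0‖ = 1) (h1' : lam0 ≠ 1) (h2' : lam0 ≠ -1)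
    (η₁ η₂ : Fin 4 → ℂ)
    (h1 : γ.mulVec η₁ = lam0 • η₁)
    (h2 : γ.mulVec η₂ = lam0 • η₂ + lam0 • η₁) :
    herm η₂ (J4.mulVec (conjVec η₁)) = 0 ∧ herm η₁ (J4.mulVec (conjVec η₂)) = 0 := by
  set s := η₂ ⬝ᵥ J4.mulVec η₁ with hs
  have self0 : η₁ ⬝ᵥ J4.mulVec η₁ = 0 := by
    have := form_antisymm η₁ η₁
    linear_combination this / 2
  have key : s = lam0 ^ 2 * s := by
    have h := form_inv γ hsymp η₂ η₁
    rw [h1, h2] at h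
    have expand : (lam0 • η₂ + lam0 • η₁) ⬝ᵥ J4.mulVec (lam0 • η₁)
        = lam0 ^ 2 * s + lam0 ^ 2 * (η₁ ⬝ᵥ J4.mulVec η₁) := by
      simp only [Matrix.mulVec_smul, add_dotProduct, smul_dotProduct,
        dotProduct_smul, smul_eq_mul, hs]
      ring
    rw [expand, self0] at h
    linear_combination -h
  have hl2 : lam0 ^ 2 ≠ 1 := by
    intro h
    have hfac : (lam0 - 1) * (lam0 + 1) = 0 := by linear_combination h
    rcases mul_eq_zero.1 hfac with h | h
    · exact h1' (by linear_combination h)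
    · exact h2' (by linear_combination h)
  have hs0 : s = 0 := by
    have hmul : (1 - lam0 ^ 2) * s = 0 := by linear_combination key
    rcases mul_eq_zero.1 hmul with h | h
    · exact absurd (by linear_combination -h) hl2
    · exact h
  constructor
  · rw [herm_eq]; exact hs0
  · rw [herm_eq, form_antisymm, ← hs, hs0]; ring
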